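/- With a_k(r,λ) as above and for all r > arctanh(1/2), a_k(r,λ) ≤ ∫₀^r cosh(s)^k ds, and b_k(r,λ) ≤ 1/λ + 2λ ∫₀^r cosh(s)^k ds. -/

import Mathlib

open intervalIntegral Real

/-- The inverse hyperbolic tangent. -/
noncomputable def arctanh (x : ℝ) : ℝ := Real.log ((1 + x) / (1 - x)) / 2

/-- The cosine coefficient `a_k(r,λ)`. -/
noncomputable def acoeff (k : ℕ) (r lam : ℝ) : ℝ :=
  (2:ℝ) ^ (-(k:ℝ)) * ∑ j ∈ Finset.range (k + 1),
    (k.choose j : ℝ) * ((2 * (j:ℝ) - k) * Real.sinh ((2 * (j:ℝ) - k) * r)) /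
      ((2 * (j:ℝ) - k) ^ 2 + lam ^ 2)

/-- The sine coefficient `b_k(r,λ)`. -/
noncomputable def bcoeff (k : ℕ) (r lam : ℝ) : ℝ :=
  lam * (2:ℝ) ^ (-(k:ℝ)) * ∑ j ∈ Finset.range (k + 1),
    (k.choose j : ℝ) * Real.cosh ((2 * (j:ℝ) - k) * r) /
      ((2 * (j:ℝ) - k) ^ 2 + lam ^ 2)

lemma myIntCosh (m r : ℝ) : ∫ s in (0:ℝ)..r, Real.cosh (m * s)
    = if m = 0 then r else Real.sinh (m * r) / m := by
  rcases eq_or_ne m 0 with h | h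
  · simp [h]
  · rw [if_neg h]
    have hd : ∀ s : ℝ, HasDerivAt (fun x => Real.sinh (m * x) / m) (Real.cosh (m * s)) s := by
      intro s
      have h1 : HasDerivAt (fun x : ℝ => m * x) m s := by
        simpa using (hasDerivAt_id s).const_mul m
      have h2 : HasDerivAt (fun x => Real.sinh (m * x)) (Real.cosh (m * s) * m) s :=
        (Real.hasDerivAt_sinh (m * s)).comp s h1
      have := h2.div_const m
      simpa [mul_div_assoc, mul_div_cancel_right₀ _ h] using this
    rw [intervalIntegral.integral_eq_sub_of_hasDerivAt (fun s _ => hd s)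
        ((Real.continuous_cosh.comp (continuous_const.mul continuous_id)).intervalIntegrable 0 r)]
    simp

lemma cosh_pow_sum (k : ℕ) (s : ℝ) :
    Real.cosh s ^ k = (2:ℝ) ^ (-(k:ℝ)) * ∑ j ∈ Finset.range (k+1),
      (k.choose j : ℝ) * Real.cosh ((2*(j:ℝ) - k) * s) := by
  have hterm : ∀ j ∈ Finset.range (k+1),
      Real.exp s ^ j * Real.exp (-s) ^ (k - j) = Real.exp ((2*(j:ℝ) - k) * s) := by
    intro j hj
    rw [Finset.mem_range, Nat.lt_succ_iff] at hj
    rw [← Real.exp_nat_mul, ← Real.exp_nat_mul, ← Real.exp_add]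
    congr 1
    rw [Nat.cast_sub hj]
    ring
  have hS : (Real.exp s + Real.exp (-s)) ^ k
      = ∑ j ∈ Finset.range (k+1), (k.choose j : ℝ) * Real.exp ((2*(j:ℝ) - k) * s) := by
    rw [add_pow]
    refine Finset.sum_congr rfl fun j hj => ?_
    rw [hterm j hj]; ring
  have hrefl : ∑ j ∈ Finset.range (k+1), (k.choose j : ℝ) * Real.exp (-((2*(j:ℝ) - k) * s))
      = ∑ j ∈ Finset.range (k+1), (k.choose j : ℝ) * Real.exp ((2*(j:ℝ) - k) * s) := by
    rw [← Finset.sum_range_reflect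
      (fun j => (k.choose j : ℝ) * Real.exp ((2*(j:ℝ) - k) * s)) (k+1)]
    refine Finset.sum_congr rfl fun j hj => ?_
    rw [Finset.mem_range, Nat.lt_succ_iff] at hj
    have h1 : k + 1 - 1 - j = k - j := by omega
    rw [h1, Nat.choose_symm hj]
    congr 2
    rw [Nat.cast_sub hj]
    ring
  have hcoshsum : ∑ j ∈ Finset.range (k+1), (k.choose j : ℝ) * Real.cosh ((2*(j:ℝ) - k) * s)
      = ∑ j ∈ Finset.range (k+1), (k.choose j : ℝ) * Real.exp ((2*(j:ℝ) - k) * s) := by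
    have hc : ∀ j ∈ Finset.range (k+1), (k.choose j : ℝ) * Real.cosh ((2*(j:ℝ) - k) * s)
        = ((k.choose j : ℝ) * Real.exp ((2*(j:ℝ) - k) * s)
          + (k.choose j : ℝ) * Real.exp (-((2*(j:ℝ) - k) * s))) / 2 := by
      intro j _; rw [Real.cosh_eq]; ring
    rw [Finset.sum_congr rfl hc, ← Finset.sum_div, Finset.sum_add_distrib, hrefl]
    ring
  rw [Real.cosh_eq, div_pow, hS, ← hcoshsum, Real.rpow_neg (by norm_num), Real.rpow_natCast,
    div_eq_mul_inv, mul_comm]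


lemma termA (lam r m : ℝ) (hr : 0 ≤ r) :
    m * Real.sinh (m * r) / (m ^ 2 + lam ^ 2)
      ≤ if m = 0 then r else Real.sinh (m * r) / m := by
  rcases eq_or_ne m 0 with h | h
  · simp [h, hr]
  · rw [if_neg h]
    have hm2 : 0 < m ^ 2 := by positivity
    have hnum : 0 ≤ m * Real.sinh (m * r) := by
      rcases le_or_gt 0 m with hm | hm
      · exact mul_nonneg hm ((by rw [← Real.sinh_zero]; exact Real.sinh_le_sinh.mpr (mul_nonneg hm hr)))
      · have h1 : m * r ≤ 0 := mul_nonpos_of_nonpos_of_nonneg hm.le hr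
        have h2 : Real.sinh (m * r) ≤ 0 := by
          rw [← Real.sinh_zero]
          exact Real.sinh_le_sinh.mpr h1
        nlinarith
    calc m * Real.sinh (m * r) / (m ^ 2 + lam ^ 2)
        ≤ m * Real.sinh (m * r) / (m ^ 2) := by
          apply div_le_div_of_nonneg_left hnum hm2
          nlinarith [sq_nonneg lam]
      _ = Real.sinh (m * r) / m := by
          rw [sq, mul_div_mul_left _ _ h]

lemma termBpos (lam r c : ℝ) (hc : 1 ≤ c) (hlam : 0 < lam) (hr : Real.log 3 / 2 < r) :
    Real.cosh (c * r) / (c ^ 2 + lam ^ 2) ≤ 2 * (Real.sinh (c * r) / c) := by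
  have h3 : (0:ℝ) < Real.log 3 := Real.log_pos (by norm_num)
  have hr0 : 0 < r := lt_trans (by positivity) hr
  have hc0 : 0 < c := lt_of_lt_of_le one_pos hc
  have hcr : Real.log 3 / 2 < c * r := lt_of_lt_of_le hr (le_mul_of_one_le_left hr0.le hc)
  have hexp3 : (3:ℝ) ≤ Real.exp (c * r) * Real.exp (c * r) := by
    rw [← Real.exp_add]
    calc (3:ℝ) = Real.exp (Real.log 3) := (Real.exp_log (by norm_num)).symm
      _ ≤ Real.exp (c * r + c * r) := Real.exp_le_exp.mpr (by linarith)
  have hprod : Real.exp (c * r) * Real.exp (-(c * r)) = 1 := by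
    rw [← Real.exp_add]; simp
  have hkey : Real.cosh (c * r) ≤ 2 * Real.sinh (c * r) := by
    rw [Real.cosh_eq, Real.sinh_eq]
    nlinarith [Real.exp_pos (c * r), Real.exp_pos (-(c * r))]
  have hsinh : 0 ≤ Real.sinh (c * r) := (by rw [← Real.sinh_zero]; exact Real.sinh_le_sinh.mpr (by positivity))
  have hden : c ≤ c ^ 2 + lam ^ 2 := by nlinarith [sq_nonneg lam]
  calc Real.cosh (c * r) / (c ^ 2 + lam ^ 2)
      ≤ (2 * Real.sinh (c * r)) / c := div_le_div₀ (by linarith) hkey hc0 hden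
    _ = 2 * (Real.sinh (c * r) / c) := by ring

lemma termB (lam r : ℝ) (m : ℤ) (hm : m ≠ 0) (hlam : 0 < lam) (hr : Real.log 3 / 2 < r) :
    lam * (Real.cosh ((m:ℝ) * r) / ((m:ℝ) ^ 2 + lam ^ 2))
      ≤ 2 * lam * (Real.sinh ((m:ℝ) * r) / (m:ℝ)) := by
  have key : Real.cosh ((m:ℝ) * r) / ((m:ℝ) ^ 2 + lam ^ 2)
      ≤ 2 * (Real.sinh ((m:ℝ) * r) / (m:ℝ)) := by
    rcases lt_or_gt_of_ne hm with hneg | hpos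
    · have hc : (1:ℝ) ≤ (-m : ℤ) := by exact_mod_cast (by omega : (1:ℤ) ≤ -m)
      have := termBpos lam r (-(m:ℝ)) (by push_cast at hc ⊢; linarith) hlam hr
      rw [neg_mul, Real.cosh_neg, Real.sinh_neg, neg_sq] at this
      calc Real.cosh ((m:ℝ) * r) / ((m:ℝ) ^ 2 + lam ^ 2)
          ≤ 2 * (-Real.sinh ((m:ℝ) * r) / -(m:ℝ)) := this
        _ = 2 * (Real.sinh ((m:ℝ) * r) / (m:ℝ)) := by rw [neg_div_neg_eq]
    · have hc : (1:ℝ) ≤ (m:ℝ) := by exact_mod_cast (by omega : (1:ℤ) ≤ m)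
      exact termBpos lam r (m:ℝ) hc hlam hr
  calc lam * (Real.cosh ((m:ℝ) * r) / ((m:ℝ) ^ 2 + lam ^ 2))
      ≤ lam * (2 * (Real.sinh ((m:ℝ) * r) / (m:ℝ))) := by
        exact mul_le_mul_of_nonneg_left key hlam.le
    _ = 2 * lam * (Real.sinh ((m:ℝ) * r) / (m:ℝ)) := by ring

theorem acoeff_bcoeff_bounds (k : ℕ) (r lam : ℝ) (hlam : 0 < lam)
    (hr : arctanh (1/2) < r) :
    acoeff k r lam ≤ ∫ s in (0:ℝ)..r, Real.cosh s ^ k ∧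
    bcoeff k r lam ≤ 1 / lam + 2 * lam * ∫ s in (0:ℝ)..r, Real.cosh s ^ k := by
  have harc : arctanh (1/2) = Real.log 3 / 2 := by
    unfold arctanh; norm_num
  rw [harc] at hr
  have hl3 : 0 < Real.log 3 := Real.log_pos (by norm_num)
  have hr0 : 0 < r := by linarith
  have hcpos : (0:ℝ) < (2:ℝ) ^ (-(k:ℝ)) := Real.rpow_pos_of_pos two_pos _
  have hc2k : ((2:ℝ) ^ (-(k:ℝ))) * 2 ^ k = 1 := by
    rw [Real.rpow_neg (by norm_num), Real.rpow_natCast]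
    exact inv_mul_cancel₀ (by positivity)
  -- the integral identity
  have hint : (∫ s in (0:ℝ)..r, Real.cosh s ^ k)
      = (2:ℝ) ^ (-(k:ℝ)) * ∑ j ∈ Finset.range (k+1), (k.choose j : ℝ) *
          (if (2*(j:ℝ) - k) = 0 then r
           else Real.sinh ((2*(j:ℝ) - k) * r) / (2*(j:ℝ) - k)) := by
    simp_rw [cosh_pow_sum k]
    rw [intervalIntegral.integral_const_mul]
    rw [intervalIntegral.integral_finset_sum
      (fun j _ => Continuous.intervalIntegrable (by fun_prop) 0 r)]
    congr 1
    refine Finset.sum_congr rfl fun j _ => ?_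
    rw [intervalIntegral.integral_const_mul, myIntCosh]
  constructor
  · -- a part
    rw [acoeff, hint]
    apply mul_le_mul_of_nonneg_left _ hcpos.le
    refine Finset.sum_le_sum fun j _ => ?_
    rw [mul_div_assoc]
    exact mul_le_mul_of_nonneg_left (termA lam r _ hr0.le) (Nat.cast_nonneg _)
  · -- b part
    have hb1 : ∀ j ∈ Finset.range (k+1),
        lam * ((k.choose j : ℝ) * Real.cosh ((2*(j:ℝ) - k) * r) /
            ((2*(j:ℝ) - k) ^ 2 + lam ^ 2))
          ≤ (k.choose j : ℝ) * ((if (2*(j:ℝ) - k) = 0 then 1/lam else 0)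
              + 2 * lam * (if (2*(j:ℝ) - k) = 0 then r
                  else Real.sinh ((2*(j:ℝ) - k) * r) / (2*(j:ℝ) - k))) := by
      intro j hj
      have hC : (0:ℝ) ≤ (k.choose j : ℝ) := Nat.cast_nonneg _
      by_cases h0 : (2*(j:ℝ) - k) = 0
      · rw [if_pos h0, if_pos h0, h0]
        rw [zero_mul, Real.cosh_zero]
        have heq : lam * ((k.choose j : ℝ) * 1 / ((0:ℝ) ^ 2 + lam ^ 2))
            = (k.choose j : ℝ) * (1/lam) := by
          field_simp
          ring
        rw [heq]
        have h2 : 0 ≤ (k.choose j : ℝ) * (2 * lam * r) := by positivity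
        nlinarith
      · rw [if_neg h0, if_neg h0]
        have hmz : (((2*(j:ℤ) - k : ℤ)) : ℝ) = 2*(j:ℝ) - k := by push_cast; ring
        have hmz0 : (2*(j:ℤ) - k) ≠ 0 := by
          intro h
          apply h0
          rw [← hmz, h]; simp
        have hB := termB lam r (2*(j:ℤ) - k) hmz0 hlam hr
        rw [hmz] at hB
        calc lam * ((k.choose j : ℝ) * Real.cosh ((2*(j:ℝ) - k) * r) /
              ((2*(j:ℝ) - k) ^ 2 + lam ^ 2))
            = (k.choose j : ℝ) * (lam * (Real.cosh ((2*(j:ℝ) - k) * r) /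
              ((2*(j:ℝ) - k) ^ 2 + lam ^ 2))) := by ring
          _ ≤ (k.choose j : ℝ) * (2 * lam *
              (Real.sinh ((2*(j:ℝ) - k) * r) / (2*(j:ℝ) - k))) :=
              mul_le_mul_of_nonneg_left hB hC
          _ = (k.choose j : ℝ) * (0 + 2 * lam *
              (Real.sinh ((2*(j:ℝ) - k) * r) / (2*(j:ℝ) - k))) := by ring
    have hbudget : (2:ℝ) ^ (-(k:ℝ)) * ∑ j ∈ Finset.range (k+1),
        (k.choose j : ℝ) * (if (2*(j:ℝ) - k) = 0 then 1/lam else 0) ≤ 1/lam := by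
      have h1 : ∑ j ∈ Finset.range (k+1),
          (k.choose j : ℝ) * (if (2*(j:ℝ) - k) = 0 then 1/lam else 0)
          ≤ ∑ j ∈ Finset.range (k+1), (k.choose j : ℝ) * (1/lam) := by
        refine Finset.sum_le_sum fun j _ => ?_
        refine mul_le_mul_of_nonneg_left ?_ (Nat.cast_nonneg _)
        split_ifs
        · exact le_refl _
        · positivity
      have hsum : ∑ j ∈ Finset.range (k+1), (k.choose j : ℝ) = 2 ^ k := by
        exact_mod_cast congrArg (Nat.cast (R := ℝ)) (Nat.sum_range_choose k)
      calc (2:ℝ) ^ (-(k:ℝ)) * ∑ j ∈ Finset.range (k+1),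
            (k.choose j : ℝ) * (if (2*(j:ℝ) - k) = 0 then 1/lam else 0)
          ≤ (2:ℝ) ^ (-(k:ℝ)) * ∑ j ∈ Finset.range (k+1),
            (k.choose j : ℝ) * (1/lam) := mul_le_mul_of_nonneg_left h1 hcpos.le
        _ = 1/lam := by
            rw [← Finset.sum_mul, hsum, ← mul_assoc, hc2k, one_mul]
    calc bcoeff k r lam
        = (2:ℝ) ^ (-(k:ℝ)) * ∑ j ∈ Finset.range (k+1),
            lam * ((k.choose j : ℝ) * Real.cosh ((2*(j:ℝ) - k) * r) /
              ((2*(j:ℝ) - k) ^ 2 + lam ^ 2)) := by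
          rw [bcoeff, mul_comm lam ((2:ℝ) ^ (-(k:ℝ))), mul_assoc, Finset.mul_sum]
      _ ≤ (2:ℝ) ^ (-(k:ℝ)) * ∑ j ∈ Finset.range (k+1),
            (k.choose j : ℝ) * ((if (2*(j:ℝ) - k) = 0 then 1/lam else 0)
              + 2 * lam * (if (2*(j:ℝ) - k) = 0 then r
                  else Real.sinh ((2*(j:ℝ) - k) * r) / (2*(j:ℝ) - k))) :=
          mul_le_mul_of_nonneg_left (Finset.sum_le_sum hb1) hcpos.le
      _ = (2:ℝ) ^ (-(k:ℝ)) * ∑ j ∈ Finset.range (k+1),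
            (k.choose j : ℝ) * (if (2*(j:ℝ) - k) = 0 then 1/lam else 0)
          + 2 * lam * ((2:ℝ) ^ (-(k:ℝ)) * ∑ j ∈ Finset.range (k+1),
            (k.choose j : ℝ) * (if (2*(j:ℝ) - k) = 0 then r
                  else Real.sinh ((2*(j:ℝ) - k) * r) / (2*(j:ℝ) - k))) := by
          rw [Finset.mul_sum, Finset.mul_sum, Finset.mul_sum, Finset.mul_sum,
            ← Finset.sum_add_distrib]
          refine Finset.sum_congr rfl fun j _ => ?_
          ring
      _ ≤ 1/lam + 2 * lam * ∫ s in (0:ℝ)..r, Real.cosh s ^ k := by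
          rw [hint]
          exact add_le_add_left hbudget _
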